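/- For two univariate Gaussian densities ν = N(μ₁, σ₁²) and λ = N(μ₂, σ₂²), the squared Hellinger distance equals 1 − √(2σ₁σ₂/(σ₁²+σ₂²)) · exp(−(μ₁−μ₂)²/(4(σ₁²+σ₂²))). -/

import Mathlib

open MeasureTheory Real

/-- Density of a one-dimensional Gaussian with mean μ and standard deviation σ. -/
noncomputable def gaussDensity (μ σ x : ℝ) : ℝ :=
  (1 / (σ * Real.sqrt (2 * Real.pi))) * Real.exp (-(x - μ)^2 / (2 * σ^2))

/-- For two univariate Gaussian densities `N(μ₁,σ₁²)` and `N(μ₂,σ₂²)`, the squared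
Hellinger distance `1 − ∫ √(νλ)` equals
`1 − √(2σ₁σ₂/(σ₁²+σ₂²)) · exp(−(μ₁−μ₂)²/(4(σ₁²+σ₂²)))`. -/
theorem hellinger_sq_gaussian (μ₁ μ₂ σ₁ σ₂ : ℝ) (hσ₁ : 0 < σ₁) (hσ₂ : 0 < σ₂) :
    1 - (∫ x, Real.sqrt (gaussDensity μ₁ σ₁ x * gaussDensity μ₂ σ₂ x)) =
      1 - Real.sqrt (2 * σ₁ * σ₂ / (σ₁^2 + σ₂^2)) *
        Real.exp (-(μ₁ - μ₂)^2 / (4 * (σ₁^2 + σ₂^2))) := by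
  have hS : (0:ℝ) < σ₁^2 + σ₂^2 := by positivity
  set S : ℝ := σ₁^2 + σ₂^2 with hSdef
  set b : ℝ := S / (4 * σ₁^2 * σ₂^2) with hbdef
  have hb : 0 < b := by positivity
  set m : ℝ := (μ₁ * σ₂^2 + μ₂ * σ₁^2) / S with hmdef
  set c : ℝ := Real.sqrt (1 / (σ₁ * σ₂ * (2 * Real.pi))) *
      Real.exp (-(μ₁ - μ₂)^2 / (4 * S)) with hcdef
  have hπ : (0:ℝ) < Real.pi := Real.pi_pos
  have key : ∀ x : ℝ, Real.sqrt (gaussDensity μ₁ σ₁ x * gaussDensity μ₂ σ₂ x)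
      = c * Real.exp (-b * (x - m)^2) := by
    intro x
    have hsq : gaussDensity μ₁ σ₁ x * gaussDensity μ₂ σ₂ x
        = (c * Real.exp (-b * (x - m)^2))^2 := by
      have h2π : (0:ℝ) < 2 * Real.pi := by positivity
      have hsqrt2π : Real.sqrt (2*Real.pi) * Real.sqrt (2*Real.pi) = 2*Real.pi :=
        Real.mul_self_sqrt (le_of_lt h2π)
      have hc2 : Real.sqrt (1 / (σ₁ * σ₂ * (2 * Real.pi))) ^ 2
          = 1 / (σ₁ * σ₂ * (2 * Real.pi)) := Real.sq_sqrt (by positivity)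
      rw [hcdef, mul_pow, mul_pow, hc2, ← Real.exp_nat_mul, ← Real.exp_nat_mul,
        gaussDensity, gaussDensity]
      rw [show (1 / (σ₁ * Real.sqrt (2*Real.pi))) * Real.exp (-(x - μ₁)^2 / (2 * σ₁^2)) *
          ((1 / (σ₂ * Real.sqrt (2*Real.pi))) * Real.exp (-(x - μ₂)^2 / (2 * σ₂^2)))
          = (1 / (σ₁ * σ₂ * (Real.sqrt (2*Real.pi) * Real.sqrt (2*Real.pi)))) *
            (Real.exp (-(x - μ₁)^2 / (2 * σ₁^2)) * Real.exp (-(x - μ₂)^2 / (2 * σ₂^2)))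
        from by ring]
      rw [hsqrt2π, ← Real.exp_add, mul_assoc (1 / (σ₁ * σ₂ * (2 * Real.pi))), ← Real.exp_add]
      congr 2
      rw [hbdef, hmdef, hSdef]
      have h1 : σ₁ ≠ 0 := ne_of_gt hσ₁
      have h2 : σ₂ ≠ 0 := ne_of_gt hσ₂
      have hS' : σ₁^2 + σ₂^2 ≠ 0 := ne_of_gt hS
      field_simp
      ring
    rw [hsq, Real.sqrt_sq (by positivity)]
  have hint : (∫ x, Real.sqrt (gaussDensity μ₁ σ₁ x * gaussDensity μ₂ σ₂ x))
      = c * Real.sqrt (Real.pi / b) := by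
    simp_rw [key]
    rw [integral_const_mul]
    have := integral_gaussian b
    have hshift : (∫ x : ℝ, Real.exp (-b * (x - m)^2)) = ∫ x : ℝ, Real.exp (-b * x^2) :=
      integral_sub_right_eq_self (fun x => Real.exp (-b * x^2)) m
    rw [hshift, this]
  rw [hint]
  congr 1
  rw [hcdef, mul_comm (Real.sqrt _) (Real.exp _), mul_assoc,
    ← Real.sqrt_mul (by positivity)]
  rw [mul_comm]
  congr 2
  rw [hbdef, hSdef]
  have h1 : σ₁ ≠ 0 := ne_of_gt hσ₁
  have h2 : σ₂ ≠ 0 := ne_of_gt hσ₂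
  have hS' : σ₁^2 + σ₂^2 ≠ 0 := ne_of_gt hS
  have hπ' : Real.pi ≠ 0 := ne_of_gt hπ
  field_simp
  ring
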